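/- Let L ⊆ 𝔽₂ⁿ be a subspace, A ∈ 𝔽₂ⁿ, and t ∈ ℝ. Then the character-twisted real-time partition function satisfies Σ_{J ∈ L^⊥} (−1)^{χ(A·J)} · exp(−i·t·‖J‖) = (1/|L|) · (2·exp(−i·t/2))ⁿ · Σ_{C ∈ L} (cos(t/2))^{n−‖A+C‖} · (i·sin(t/2))^{‖A+C‖}. (Eq. (ZofA): inserting a sign (−1)^{A·J} into the real-time partition function shifts the Wegner-dual sum to the affine subspace A + L.) -/

import Mathlib

open Finset

/-- Hamming weight of a binary vector. -/
def wt {n : ℕ} (v : Fin n → ZMod 2) : ℕ :=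
  (Finset.univ.filter (fun i => v i = 1)).card

namespace TwistedAux

/-- The dot-product bilinear form on `𝔽₂ⁿ`. -/
noncomputable def dotForm (n : ℕ) : LinearMap.BilinForm (ZMod 2) (Fin n → ZMod 2) :=
  LinearMap.mk₂ (ZMod 2) (fun x y => ∑ i, x i * y i)
    (fun x y z => by simp [add_mul, Finset.sum_add_distrib])
    (fun c x y => by simp [Finset.mul_sum, mul_assoc])
    (fun x y z => by simp [mul_add, Finset.sum_add_distrib])
    (fun c x y => by simp [Finset.mul_sum, mul_left_comm])

lemma dotForm_apply {n : ℕ} (x y : Fin n → ZMod 2) :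
    dotForm n x y = ∑ i, x i * y i := rfl

lemma dotForm_symm {n : ℕ} (x y : Fin n → ZMod 2) :
    dotForm n x y = dotForm n y x := by
  simp [dotForm_apply, mul_comm]

lemma dotForm_refl {n : ℕ} : (dotForm n).IsRefl := by
  intro x y h
  rwa [dotForm_symm]

lemma dotForm_nondeg {n : ℕ} : (dotForm n).Nondegenerate := by
  refine (LinearMap.IsRefl.nondegenerate_iff_separatingLeft dotForm_refl).mpr ?_
  intro x hx
  funext j
  have := hx (Pi.single j 1)
  simpa [dotForm_apply, Pi.single_apply, mul_ite] using this

/-- Sign character on `ZMod 2`. -/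
noncomputable def sgn (x : ZMod 2) : ℂ := (-1 : ℂ) ^ x.val

lemma zmod2_cases (a : ZMod 2) : a = 0 ∨ a = 1 := by revert a; decide

lemma sgn_zero : sgn 0 = 1 := by simp [sgn]

lemma sgn_one : sgn 1 = -1 := by
  have : (1 : ZMod 2).val = 1 := rfl
  simp [sgn, this]

lemma sgn_add (a b : ZMod 2) : sgn (a + b) = sgn a * sgn b := by
  rcases zmod2_cases a with ha | ha <;> rcases zmod2_cases b with hb | hb <;>
    subst ha <;> subst hb <;> simp [sgn_zero, sgn_one, show (1+1 : ZMod 2) = 0 from by decide]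

lemma sgn_sum {n : ℕ} (S : Finset (Fin n)) (f : Fin n → ZMod 2) :
    sgn (∑ i ∈ S, f i) = ∏ i ∈ S, sgn (f i) := by
  classical
  induction S using Finset.cons_induction with
  | empty => simp [sgn_zero]
  | cons a s ha ih => rw [Finset.sum_cons, Finset.prod_cons, sgn_add, ih]


lemma zmod2_ne_zero {a : ZMod 2} (h : a ≠ 0) : a = 1 := by
  rcases zmod2_cases a with h0 | h1
  · exact absurd h0 h
  · exact h1

open LinearMap.BilinForm in
/-- Character orthogonality over the dual code. -/
lemma char_sum {n : ℕ} (L : Submodule (ZMod 2) (Fin n → ZMod 2))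
    (V : Fin n → ZMod 2) [DecidablePred (· ∈ (dotForm n).orthogonal L)] [Decidable (V ∈ L)] :
    ∑ J ∈ Finset.univ.filter (· ∈ (dotForm n).orthogonal L), sgn (dotForm n V J)
      = if V ∈ L then ((Finset.univ.filter (· ∈ (dotForm n).orthogonal L)).card : ℂ) else 0 := by
  classical
  by_cases hV : V ∈ L
  · rw [if_pos hV]
    rw [Finset.sum_congr rfl (fun J hJ => ?_), Finset.sum_const, nsmul_eq_mul, mul_one]
    have hJ' : J ∈ (dotForm n).orthogonal L := (Finset.mem_filter.mp hJ).2
    have : dotForm n V J = 0 := hJ' V hV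
    rw [this, sgn_zero]
  · rw [if_neg hV]
    -- find J₀ in the dual with V·J₀ = 1
    have hVV : V ∉ (dotForm n).orthogonal ((dotForm n).orthogonal L) := by
      rwa [LinearMap.BilinForm.orthogonal_orthogonal dotForm_nondeg dotForm_refl]
    rw [LinearMap.BilinForm.mem_orthogonal_iff] at hVV
    push_neg at hVV
    obtain ⟨J₀, hJ₀, hJ₀V⟩ := hVV
    have hdot : dotForm n V J₀ = 1 := by
      rw [dotForm_symm]
      exact zmod2_ne_zero hJ₀V
    have key : ∑ J ∈ Finset.univ.filter (· ∈ (dotForm n).orthogonal L), sgn (dotForm n V J)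
        = ∑ J ∈ Finset.univ.filter (· ∈ (dotForm n).orthogonal L), -sgn (dotForm n V J) := by
      refine Finset.sum_nbij' (fun J => J + J₀) (fun J => J + J₀) ?_ ?_ ?_ ?_ ?_
      · intro a ha
        simp only [Finset.mem_filter, Finset.mem_univ, true_and] at ha ⊢
        exact Submodule.add_mem _ ha hJ₀
      · intro a ha
        simp only [Finset.mem_filter, Finset.mem_univ, true_and] at ha ⊢
        exact Submodule.add_mem _ ha hJ₀
      · intro a _
        funext i
        simp only [Pi.add_apply]
        rcases zmod2_cases (J₀ i) with h | h <;> rcases zmod2_cases (a i) with h' | h' <;>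
          simp [h, h', show (1 + 1 : ZMod 2) = 0 from by decide]
      · intro a _
        funext i
        simp only [Pi.add_apply]
        rcases zmod2_cases (J₀ i) with h | h <;> rcases zmod2_cases (a i) with h' | h' <;>
          simp [h, h', show (1 + 1 : ZMod 2) = 0 from by decide]
      · intro a _
        have : dotForm n V (a + J₀) = dotForm n V a + 1 := by
          rw [map_add, hdot]
        rw [this, sgn_add, sgn_one]
        ring
    have h2 : (∑ J ∈ Finset.univ.filter (· ∈ (dotForm n).orthogonal L), sgn (dotForm n V J))
        + ∑ J ∈ Finset.univ.filter (· ∈ (dotForm n).orthogonal L), sgn (dotForm n V J) = 0 := by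
      nth_rewrite 2 [key]
      rw [← Finset.sum_add_distrib]
      simp
    exact add_self_eq_zero.mp h2

lemma card_mul {n : ℕ} (L : Submodule (ZMod 2) (Fin n → ZMod 2))
    [DecidablePred (· ∈ (dotForm n).orthogonal L)] :
    ((Finset.univ.filter (· ∈ (dotForm n).orthogonal L)).card) * Nat.card L = 2 ^ n := by
  classical
  have h1 : (Finset.univ.filter (· ∈ (dotForm n).orthogonal L)).card
      = Fintype.card ((dotForm n).orthogonal L) := by
    rw [Fintype.card_subtype]
  have hL : Nat.card L = 2 ^ Module.finrank (ZMod 2) L := by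
    rw [Nat.card_eq_fintype_card, Module.card_eq_pow_finrank (K := ZMod 2), ZMod.card]
  have hLp : Fintype.card ((dotForm n).orthogonal L)
      = 2 ^ (n - Module.finrank (ZMod 2) L) := by
    rw [Module.card_eq_pow_finrank (K := ZMod 2), ZMod.card,
      LinearMap.BilinForm.finrank_orthogonal dotForm_nondeg,
      Module.finrank_fin_fun]
  have hle : Module.finrank (ZMod 2) L ≤ n := by
    have := Submodule.finrank_le L
    rwa [Module.finrank_fin_fun] at this
  rw [h1, hL, hLp, ← pow_add, Nat.sub_add_cancel hle]


lemma exp_factor (t : ℝ) : ∀ x : ZMod 2,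
    Complex.exp (-Complex.I * t / 2) *
      ((Real.cos (t / 2) : ℂ) + Complex.I * (Real.sin (t / 2) : ℂ) * sgn x)
    = if x = 1 then Complex.exp (-Complex.I * t) else 1 := by
  have he : Complex.exp (-Complex.I * t / 2)
      = Complex.cos ((t : ℂ) / 2) - Complex.sin ((t : ℂ) / 2) * Complex.I := by
    rw [show -Complex.I * (t : ℂ) / 2 = (-((t : ℂ) / 2)) * Complex.I by ring,
      Complex.exp_mul_I, Complex.cos_neg, Complex.sin_neg]
    ring
  have hc : (Real.cos (t / 2) : ℂ) = Complex.cos ((t : ℂ) / 2) := by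
    rw [Complex.ofReal_cos]; norm_num
  have hs : (Real.sin (t / 2) : ℂ) = Complex.sin ((t : ℂ) / 2) := by
    rw [Complex.ofReal_sin]; norm_num
  have hee : Complex.exp (-Complex.I * t)
      = Complex.exp (-Complex.I * t / 2) * Complex.exp (-Complex.I * t / 2) := by
    rw [← Complex.exp_add]; ring_nf
  intro x
  rcases zmod2_cases x with h | h <;> subst h
  · rw [if_neg (by decide), sgn_zero, he, hc, hs]
    linear_combination Complex.sin_sq_add_cos_sq ((t : ℂ) / 2) + (-(Complex.sin ((t : ℂ) / 2)) ^ 2) * Complex.I_sq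
  · rw [if_pos rfl, sgn_one, hee, he, hc, hs]
    ring

lemma sum_zmod2 (f : ZMod 2 → ℂ) : ∑ x : ZMod 2, f x = f 0 + f 1 := by
  rw [show (Finset.univ : Finset (ZMod 2)) = {0, 1} from by decide]
  rw [Finset.sum_insert (by decide), Finset.sum_singleton]

lemma dot_eq_sum_filter {n : ℕ} (D J : Fin n → ZMod 2) [DecidableEq (ZMod 2)] :
    dotForm n D J = ∑ i ∈ Finset.univ.filter (fun i => D i = 1), J i := by
  rw [dotForm_apply, Finset.sum_filter]
  refine Finset.sum_congr rfl fun i _ => ?_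
  rcases zmod2_cases (D i) with h | h <;> simp [h]

lemma prod_expand {n : ℕ} (t : ℝ) (J : Fin n → ZMod 2) :
    ∏ i, ((Real.cos (t / 2) : ℂ) + Complex.I * (Real.sin (t / 2) : ℂ) * sgn (J i))
      = ∑ D : Fin n → ZMod 2,
          (Real.cos (t / 2) : ℂ) ^ (n - wt D) *
            (Complex.I * (Real.sin (t / 2) : ℂ)) ^ wt D * sgn (dotForm n D J) := by
  classical
  set c : ℂ := (Real.cos (t / 2) : ℂ)
  set s : ℂ := Complex.I * (Real.sin (t / 2) : ℂ)
  have h1 : ∀ i, c + s * sgn (J i)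
      = ∑ x : ZMod 2, (if x = 1 then s * sgn (J i) else c) := by
    intro i
    rw [sum_zmod2]
    simp
  calc ∏ i, (c + s * sgn (J i))
      = ∏ i, ∑ x : ZMod 2, (if x = 1 then s * sgn (J i) else c) :=
        Finset.prod_congr rfl fun i _ => h1 i
    _ = ∑ D ∈ Fintype.piFinset (fun _ : Fin n => (Finset.univ : Finset (ZMod 2))),
          ∏ i, (if D i = 1 then s * sgn (J i) else c) := Finset.prod_univ_sum _ _
    _ = ∑ D : Fin n → ZMod 2, ∏ i, (if D i = 1 then s * sgn (J i) else c) := by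
        rw [Fintype.piFinset_univ]
    _ = ∑ D : Fin n → ZMod 2, c ^ (n - wt D) * s ^ wt D * sgn (dotForm n D J) := by
        refine Finset.sum_congr rfl fun D _ => ?_
        rw [Finset.prod_ite]
        have hcard : (Finset.univ.filter (fun i => ¬ D i = 1)).card = n - wt D := by
          have := Finset.card_filter_add_card_filter_not
            (s := (Finset.univ : Finset (Fin n))) (p := fun i => D i = 1)
          simp only [Finset.card_univ, Fintype.card_fin] at this
          have hwt : wt D = (Finset.univ.filter (fun i => D i = 1)).card := rfl
          omega
        rw [Finset.prod_const, Finset.prod_mul_distrib, Finset.prod_const, hcard,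
          dot_eq_sum_filter, sgn_sum]
        have hwt : wt D = (Finset.univ.filter (fun i => D i = 1)).card := rfl
        rw [← hwt]
        ring

lemma expand {n : ℕ} (t : ℝ) (A J : Fin n → ZMod 2) :
    sgn (dotForm n A J) * Complex.exp (-Complex.I * t * (wt J : ℂ))
      = ∑ D : Fin n → ZMod 2, Complex.exp (-Complex.I * t / 2) ^ n *
          ((Real.cos (t / 2) : ℂ) ^ (n - wt D) *
            (Complex.I * (Real.sin (t / 2) : ℂ)) ^ wt D * sgn (dotForm n (A + D) J)) := by
  classical
  have hwtJ : Complex.exp (-Complex.I * t * (wt J : ℂ))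
      = Complex.exp (-Complex.I * t / 2) ^ n *
          ∏ i, ((Real.cos (t / 2) : ℂ) + Complex.I * (Real.sin (t / 2) : ℂ) * sgn (J i)) := by
    calc Complex.exp (-Complex.I * t * (wt J : ℂ))
        = Complex.exp (-Complex.I * t) ^ wt J := by
          rw [show -Complex.I * t * (wt J : ℂ) = (wt J : ℂ) * (-Complex.I * t) by ring,
            Complex.exp_nat_mul]
      _ = ∏ i ∈ Finset.univ.filter (fun i => J i = 1), Complex.exp (-Complex.I * t) := by
          rw [Finset.prod_const]; rfl
      _ = ∏ i, (if J i = 1 then Complex.exp (-Complex.I * t) else 1) :=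
          Finset.prod_filter _ _
      _ = ∏ i, (Complex.exp (-Complex.I * t / 2) *
            ((Real.cos (t / 2) : ℂ) + Complex.I * (Real.sin (t / 2) : ℂ) * sgn (J i))) :=
          Finset.prod_congr rfl fun i _ => (exp_factor t (J i)).symm
      _ = Complex.exp (-Complex.I * t / 2) ^ n *
            ∏ i, ((Real.cos (t / 2) : ℂ) + Complex.I * (Real.sin (t / 2) : ℂ) * sgn (J i)) := by
          rw [Finset.prod_mul_distrib, Finset.prod_const, Finset.card_univ, Fintype.card_fin]
  rw [hwtJ, prod_expand, Finset.mul_sum, Finset.mul_sum]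
  refine Finset.sum_congr rfl fun D _ => ?_
  have hadd : dotForm n (A + D) J = dotForm n A J + dotForm n D J := by
    rw [map_add]; rfl
  rw [hadd, sgn_add]
  ring

end TwistedAux

open TwistedAux

open scoped Classical in
/-- **Character-twisted real-time Wegner duality** (Eq. (ZofA)): inserting a sign
`(−1)^{χ(A·J)}` into the real-time partition function over `L^⊥` shifts the Wegner-dual
sum to the affine subspace `A + L`. -/
theorem twisted_real_time_wegner_duality {n : ℕ}
    (L : Submodule (ZMod 2) (Fin n → ZMod 2)) (A : Fin n → ZMod 2) (t : ℝ) :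
    ∑ J ∈ Finset.univ.filter (fun J : Fin n → ZMod 2 => ∀ B ∈ L, ∑ i, B i * J i = 0),
        (-1 : ℂ) ^ (∑ i, A i * J i).val * Complex.exp (-Complex.I * t * (wt J : ℂ))
      = (1 / (Nat.card L : ℂ)) * (2 * Complex.exp (-Complex.I * t / 2)) ^ n *
          ∑ C ∈ Finset.univ.filter (fun C => C ∈ L),
            (Real.cos (t / 2) : ℂ) ^ (n - wt (A + C)) *
              (Complex.I * (Real.sin (t / 2) : ℂ)) ^ wt (A + C) := by
  classical
  set c : ℂ := (Real.cos (t / 2) : ℂ) with hc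
  set s : ℂ := Complex.I * (Real.sin (t / 2) : ℂ) with hs
  set e : ℂ := Complex.exp (-Complex.I * t / 2) with he
  set Fs : Finset (Fin n → ZMod 2) :=
    Finset.univ.filter (· ∈ (dotForm n).orthogonal L) with hFs
  set N : ℕ := Fs.card with hN
  have hfilt : Finset.univ.filter
      (fun J : Fin n → ZMod 2 => ∀ B ∈ L, ∑ i, B i * J i = 0) = Fs := by
    ext J
    simp only [hFs, Finset.mem_filter, Finset.mem_univ, true_and,
      LinearMap.BilinForm.mem_orthogonal_iff, LinearMap.BilinForm.IsOrtho, dotForm_apply]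
  rw [hfilt]
  have hterm : ∀ J : Fin n → ZMod 2,
      (-1 : ℂ) ^ (∑ i, A i * J i).val * Complex.exp (-Complex.I * t * (wt J : ℂ))
        = sgn (dotForm n A J) * Complex.exp (-Complex.I * t * (wt J : ℂ)) := fun J => rfl
  calc ∑ J ∈ Fs, (-1 : ℂ) ^ (∑ i, A i * J i).val * Complex.exp (-Complex.I * t * (wt J : ℂ))
      = ∑ J ∈ Fs, ∑ D : Fin n → ZMod 2,
          e ^ n * (c ^ (n - wt D) * s ^ wt D * sgn (dotForm n (A + D) J)) := by
        refine Finset.sum_congr rfl fun J _ => ?_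
        rw [hterm J, expand]
    _ = ∑ D : Fin n → ZMod 2, ∑ J ∈ Fs,
          e ^ n * (c ^ (n - wt D) * s ^ wt D * sgn (dotForm n (A + D) J)) :=
        Finset.sum_comm (s := Fs) (t := Finset.univ)
    _ = ∑ D : Fin n → ZMod 2,
          e ^ n * (c ^ (n - wt D) * s ^ wt D * ∑ J ∈ Fs, sgn (dotForm n (A + D) J)) := by
        refine Finset.sum_congr rfl fun D _ => ?_
        simp only [Finset.mul_sum]
    _ = ∑ D : Fin n → ZMod 2,
          (if A + D ∈ L then e ^ n * (c ^ (n - wt D) * s ^ wt D * (N : ℂ)) else 0) := by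
        refine Finset.sum_congr rfl fun D _ => ?_
        rw [char_sum L (A + D)]
        by_cases h : A + D ∈ L
        · rw [if_pos h, if_pos h]
        · rw [if_neg h, if_neg h, mul_zero, mul_zero]
    _ = ∑ D ∈ Finset.univ.filter (fun D => A + D ∈ L),
          e ^ n * (c ^ (n - wt D) * s ^ wt D * (N : ℂ)) := (Finset.sum_filter _ _).symm
    _ = ∑ C ∈ Finset.univ.filter (fun C => C ∈ L),
          e ^ n * (c ^ (n - wt (A + C)) * s ^ wt (A + C) * (N : ℂ)) := by
        refine Finset.sum_nbij' (fun D => A + D) (fun C => A + C) ?_ ?_ ?_ ?_ ?_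
        · intro D hD
          simpa using (Finset.mem_filter.mp hD).2
        · intro C hC
          simp only [Finset.mem_filter, Finset.mem_univ, true_and]
          have hAA : A + (A + C) = C := by
            funext i
            simp only [Pi.add_apply]
            rcases zmod2_cases (A i) with h | h <;>
              simp [h, ← add_assoc, show (1 + 1 : ZMod 2) = 0 from by decide]
          rw [hAA]
          exact (Finset.mem_filter.mp hC).2
        · intro D _
          funext i
          simp only [Pi.add_apply]
          rcases zmod2_cases (A i) with h | h <;>
            simp [h, ← add_assoc, show (1 + 1 : ZMod 2) = 0 from by decide]
        · intro C _
          funext i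
          simp only [Pi.add_apply]
          rcases zmod2_cases (A i) with h | h <;>
            simp [h, ← add_assoc, show (1 + 1 : ZMod 2) = 0 from by decide]
        · intro D _
          have hAA : A + (A + D) = D := by
            funext i
            simp only [Pi.add_apply, ← add_assoc]
            rcases zmod2_cases (A i) with h | h <;>
              simp [h, show (1 + 1 : ZMod 2) = 0 from by decide]
          rw [hAA]
    _ = (1 / (Nat.card L : ℂ)) * (2 * e) ^ n *
          ∑ C ∈ Finset.univ.filter (fun C => C ∈ L),
            c ^ (n - wt (A + C)) * s ^ wt (A + C) := by
        rw [Finset.mul_sum]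
        refine Finset.sum_congr rfl fun C _ => ?_
        have hcard : (N : ℂ) * (Fintype.card L : ℂ) = 2 ^ n := by
          rw [← Nat.card_eq_fintype_card, ← Nat.cast_mul, card_mul L]
          push_cast
          ring
        have hLne : (Nat.card L : ℂ) ≠ 0 := by
          have : 0 < Nat.card L := Nat.card_pos
          exact_mod_cast this.ne'
        field_simp
        rw [mul_pow, Nat.card_eq_fintype_card]
        linear_combination (e ^ n * (c ^ (n - wt (A + C)) * s ^ wt (A + C))) * hcard
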